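/- Let G be a group and H a finite index subgroup. If every homogeneous quasi-homomorphism H → ℝ is a homomorphism, and every homogeneous quasi-homomorphism on any virtually abelian group is a homomorphism, then every homogeneous quasi-homomorphism G → ℝ is a homomorphism. (Lemma on injectivity of the restriction map QH~(G) → QH~(H).) -/

import Mathlib

def QuasiHom {G : Type*} [Group G] (φ : G → ℝ) : Prop :=
  ∃ D : ℝ, ∀ x y : G, |φ (x * y) - φ x - φ y| ≤ D

def Homog {G : Type*} [Group G] (φ : G → ℝ) : Prop :=
  ∀ (g : G) (n : ℤ), φ (g ^ n) = (n : ℝ) * φ g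

def IsHomo {G : Type*} [Group G] (φ : G → ℝ) : Prop :=
  ∀ x y : G, φ (x * y) = φ x + φ y

lemma abs_zero_of_nat_mul_le {c C : ℝ} (h : ∀ n : ℕ, (n : ℝ) * |c| ≤ C) : c = 0 := by
  by_contra hc
  have hc' : 0 < |c| := abs_pos.mpr hc
  obtain ⟨n, hn⟩ := exists_nat_gt (C / |c|)
  have h1 := h n
  have h2 : C < (n : ℝ) * |c| := (div_lt_iff₀ hc').mp hn
  linarith

lemma homog_conj {G : Type*} [Group G] (φ : G → ℝ) (hq : QuasiHom φ) (hh : Homog φ)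
    (g x : G) : φ (g * x * g⁻¹) = φ x := by
  obtain ⟨D, hD⟩ := hq
  have hinv : φ g⁻¹ = -φ g := by simpa using hh g (-1)
  have key : ∀ n : ℕ, (n : ℝ) * |φ (g * x * g⁻¹) - φ x| ≤ 2 * D := by
    intro n
    have hc : (g * x * g⁻¹) ^ n = g * x ^ n * g⁻¹ := by
      simpa using (map_pow (MulAut.conj g) x n).symm
    have h1 : φ ((g * x * g⁻¹) ^ n) = (n : ℝ) * φ (g * x * g⁻¹) := by
      rw [← zpow_natCast]; exact hh _ n
    have h2 : φ (x ^ n) = (n : ℝ) * φ x := by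
      rw [← zpow_natCast]; exact hh x n
    have A1 : |φ (g * x ^ n * g⁻¹) - φ (g * x ^ n) - φ g⁻¹| ≤ D := hD (g * x ^ n) g⁻¹
    have A2 : |φ (g * x ^ n) - φ g - φ (x ^ n)| ≤ D := hD g (x ^ n)
    have e : (n : ℝ) * |φ (g * x * g⁻¹) - φ x|
        = |(n : ℝ) * φ (g * x * g⁻¹) - (n : ℝ) * φ x| := by
      rw [← mul_sub, abs_mul, Nat.abs_cast]
    rw [e, ← h1, ← h2, hc, abs_le]
    rw [abs_le] at A1 A2
    constructor <;> [nlinarith [A1.1, A2.1, hinv]; nlinarith [A1.2, A2.2, hinv]]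
  have := abs_zero_of_nat_mul_le key
  linarith

theorem stmt5 {G : Type u} [Group G] (H : Subgroup G) [H.FiniteIndex]
    (hH : ∀ ψ : H → ℝ, QuasiHom ψ → Homog ψ → IsHomo ψ)
    (hVA : ∀ (K : Type u) [Group K],
      (∃ A : Subgroup K, A.FiniteIndex ∧ ∀ a ∈ A, ∀ b ∈ A, a * b = b * a) →
      ∀ ψ : K → ℝ, QuasiHom ψ → Homog ψ → IsHomo ψ) :
    ∀ φ : G → ℝ, QuasiHom φ → Homog φ → IsHomo φ := by
  intro φ hq hφ
  have hone : φ 1 = 0 := by simpa using hφ 1 0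
  have hinv : ∀ a : G, φ a⁻¹ = -φ a := fun a => by simpa using hφ a (-1)
  -- additivity on H
  have addH : ∀ a b : G, a ∈ H → b ∈ H → φ (a * b) = φ a + φ b := by
    intro a b ha hb
    have hψq : QuasiHom (fun h : H => φ (h : G)) := by
      obtain ⟨D, hD⟩ := hq
      exact ⟨D, fun x y => by simpa using hD x y⟩
    have hψh : Homog (fun h : H => φ (h : G)) := by
      intro h n
      simpa using hφ (h : G) n
    have := hH _ hψq hψh ⟨a, ha⟩ ⟨b, hb⟩
    simpa using this
  set N := H.normalCore with hNdef
  have hNnorm : N.Normal := H.normalCore_normal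
  have hNle : N ≤ H := H.normalCore_le
  haveI hNfi : N.FiniteIndex := inferInstance
  -- kernel of φ on N
  let N₀ : Subgroup G :=
    { carrier := {g | g ∈ N ∧ φ g = 0}
      one_mem' := ⟨N.one_mem, hone⟩
      mul_mem' := fun {a b} ha hb => ⟨N.mul_mem ha.1 hb.1, by
        rw [addH a b (hNle ha.1) (hNle hb.1), ha.2, hb.2, add_zero]⟩
      inv_mem' := fun {a} ha => ⟨N.inv_mem ha.1, by rw [hinv a, ha.2, neg_zero]⟩ }
  have memN₀ : ∀ g : G, g ∈ N₀ ↔ g ∈ N ∧ φ g = 0 := fun g => Iff.rfl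
  have hN₀le : N₀ ≤ N := fun x hx => hx.1
  haveI hN₀norm : N₀.Normal := by
    refine ⟨fun n hn g => ?_⟩
    rw [memN₀]
    exact ⟨hNnorm.conj_mem n hn.1 g, by rw [homog_conj φ hq hφ g n]; exact hn.2⟩
  -- φ is constant on cosets of N₀
  have key : ∀ g m : G, m ∈ N₀ → φ (g * m) = φ g := by
    intro g m hm
    obtain ⟨D, hD⟩ := hq
    have pow : ∀ k : ℕ, ∃ m' ∈ N₀, (g * m) ^ k = g ^ k * m' := by
      intro k
      induction k with
      | zero => exact ⟨1, N₀.one_mem, by simp⟩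
      | succ k ih =>
        obtain ⟨m', hm', hk⟩ := ih
        refine ⟨(g⁻¹ * m' * g) * m, N₀.mul_mem ?_ hm, ?_⟩
        · simpa using hN₀norm.conj_mem m' hm' g⁻¹
        · rw [pow_succ, hk, pow_succ]
          group
    have bound : ∀ k : ℕ, (k : ℝ) * |φ (g * m) - φ g| ≤ D := by
      intro k
      obtain ⟨m', hm', hk⟩ := pow k
      have h1 : φ ((g * m) ^ k) = (k : ℝ) * φ (g * m) := by
        rw [← zpow_natCast]; exact hφ _ k
      have h2 : φ (g ^ k) = (k : ℝ) * φ g := by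
        rw [← zpow_natCast]; exact hφ _ k
      have h3 := hD (g ^ k) m'
      rw [← hk] at h3
      have h4 : φ m' = 0 := hm'.2
      have e : (k : ℝ) * |φ (g * m) - φ g| = |(k : ℝ) * φ (g * m) - (k : ℝ) * φ g| := by
        rw [← mul_sub, abs_mul, Nat.abs_cast]
      rw [e, ← h1, ← h2]
      calc |φ ((g * m) ^ k) - φ (g ^ k)|
          = |φ ((g * m) ^ k) - φ (g ^ k) - φ m'| := by rw [h4, sub_zero]
        _ ≤ D := h3
    have := abs_zero_of_nat_mul_le bound
    linarith
  -- descend to the quotient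
  let π := QuotientGroup.mk' N₀
  let ψ : G ⧸ N₀ → ℝ := fun x => Quotient.liftOn' x φ (fun a b hab => by
    rw [QuotientGroup.leftRel_apply] at hab
    have hb : b = a * (a⁻¹ * b) := by group
    rw [hb, key a _ hab])
  have hπ : ∀ g : G, ψ (π g) = φ g := fun g => rfl
  have hψq : QuasiHom ψ := by
    obtain ⟨D, hD⟩ := hq
    refine ⟨D, fun x y => ?_⟩
    induction x using QuotientGroup.induction_on with | H a =>
    induction y using QuotientGroup.induction_on with | H b =>
    exact hD a b
  have hψh : Homog ψ := by
    intro x n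
    induction x using QuotientGroup.induction_on with | H a =>
    show ψ (π a ^ n) = (n : ℝ) * ψ (π a)
    rw [← map_zpow]
    exact hφ a n
  have hva : ∃ A : Subgroup (G ⧸ N₀), A.FiniteIndex ∧ ∀ a ∈ A, ∀ b ∈ A, a * b = b * a := by
    refine ⟨N.map π, ⟨?_⟩, ?_⟩
    · have h1 : ((N.map π).comap π).index = (N.map π).index :=
        Subgroup.index_comap_of_surjective _ (QuotientGroup.mk'_surjective N₀)
      have h2 : (N.map π).comap π = N := by
        rw [Subgroup.comap_map_eq, QuotientGroup.ker_mk']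
        exact sup_eq_left.mpr hN₀le
      rw [← h1, h2]
      exact hNfi.index_ne_zero
    · rintro a ⟨a', ha', rfl⟩ b ⟨b', hb', rfl⟩
      show π a' * π b' = π b' * π a'
      rw [← map_mul, ← map_mul]
      have hmem : (a' * b')⁻¹ * (b' * a') ∈ N₀ := by
        have he : (a' * b')⁻¹ * (b' * a') = b'⁻¹ * a'⁻¹ * b' * a' := by group
        rw [he, memN₀]
        constructor
        · exact N.mul_mem (N.mul_mem (N.mul_mem (N.inv_mem hb') (N.inv_mem ha')) hb') ha'
        · have s1 : φ (b'⁻¹ * a'⁻¹ * b' * a') = φ (b'⁻¹ * a'⁻¹ * b') + φ a' :=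
            addH _ _ (hNle (N.mul_mem (N.mul_mem (N.inv_mem hb') (N.inv_mem ha')) hb')) (hNle ha')
          have s2 : φ (b'⁻¹ * a'⁻¹ * b') = φ a'⁻¹ := by
            simpa using homog_conj φ hq hφ b'⁻¹ a'⁻¹
          rw [s1, s2, hinv a']
          ring
      exact (QuotientGroup.eq ).mpr hmem
  have hIs := hVA (G ⧸ N₀) hva ψ hψq hψh
  intro x y
  have := hIs (π x) (π y)
  rw [← map_mul] at this
  exact this
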